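/- Let v̂_1,…,v̂_{j−1} be orthonormal unit vectors with projection \hat{Π}_{j−1}, and v_j a unit vector orthogonal to v₁,…,v_{j−1} whose projection is Π_{j−1}. Define ṽ_j = (I − \hat{Π}_{j−1})v_j / ‖(I − \hat{Π}_{j−1})v_j‖₂ (assuming the denominator nonzero). Then ‖ṽ_j − v_j‖₂ ≤ 2‖\hat{Π}_{j−1} − Π_{j−1}‖_F. -/

import Mathlib

open BigOperators Matrix
open scoped Classical

noncomputable def enorm' {p : ℕ} (v : Fin p → ℝ) : ℝ := Real.sqrt (∑ i, (v i) ^ 2)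

noncomputable def fnorm {p : ℕ} (A : Matrix (Fin p) (Fin p) ℝ) : ℝ :=
  Real.sqrt (∑ i, ∑ j, (A i j) ^ 2)

def outer {p : ℕ} (u v : Fin p → ℝ) : Matrix (Fin p) (Fin p) ℝ :=
  Matrix.of fun i j => u i * v j

lemma outer_mulVec {p : ℕ} (u x : Fin p → ℝ) : outer u u *ᵥ x = (u ⬝ᵥ x) • u := by
  ext i
  simp only [outer, mulVec, dotProduct, Pi.smul_apply, smul_eq_mul, Matrix.of_apply,
    Finset.sum_mul]
  exact Finset.sum_congr rfl fun j _ => by ring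

lemma sum_dotProduct' {p : ℕ} {ι : Type*} (s : Finset ι) (f : ι → Fin p → ℝ) (y : Fin p → ℝ) :
    (∑ k ∈ s, f k) ⬝ᵥ y = ∑ k ∈ s, f k ⬝ᵥ y := by
  simp only [dotProduct, Finset.sum_apply, Finset.sum_mul]
  exact Finset.sum_comm

lemma dotProduct_sum' {p : ℕ} {ι : Type*} (s : Finset ι) (y : Fin p → ℝ) (f : ι → Fin p → ℝ) :
    y ⬝ᵥ (∑ k ∈ s, f k) = ∑ k ∈ s, y ⬝ᵥ f k := by
  simp only [dotProduct, Finset.sum_apply, Finset.mul_sum]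
  exact Finset.sum_comm

lemma sum_mulVec' {p : ℕ} {ι : Type*} (s : Finset ι) (A : ι → Matrix (Fin p) (Fin p) ℝ)
    (x : Fin p → ℝ) : (∑ k ∈ s, A k) *ᵥ x = ∑ k ∈ s, A k *ᵥ x := by
  ext i
  simp only [mulVec, dotProduct, Finset.sum_apply, Matrix.sum_apply, Finset.sum_mul]
  exact Finset.sum_comm

lemma dot_sq {p : ℕ} (x : Fin p → ℝ) : x ⬝ᵥ x = ∑ i, (x i) ^ 2 := by
  simp [dotProduct, sq]

lemma enorm_eq {p : ℕ} (x : Fin p → ℝ) : enorm' x = Real.sqrt (x ⬝ᵥ x) := by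
  rw [enorm', dot_sq]

theorem stmt14 {p m : ℕ} (v vh : Fin m → Fin p → ℝ)
    (hortho : ∀ k l, v k ⬝ᵥ v l = if k = l then (1 : ℝ) else 0)
    (horthoh : ∀ k l, vh k ⬝ᵥ vh l = if k = l then (1 : ℝ) else 0)
    (vj : Fin p → ℝ) (hunit : enorm' vj = 1) (hperp : ∀ k, vj ⬝ᵥ v k = 0)
    (hne : enorm' (vj - (∑ k, outer (vh k) (vh k)) *ᵥ vj) ≠ 0) :
    enorm' ((enorm' (vj - (∑ k, outer (vh k) (vh k)) *ᵥ vj))⁻¹ •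
        (vj - (∑ k, outer (vh k) (vh k)) *ᵥ vj) - vj) ≤
      2 * fnorm ((∑ k, outer (vh k) (vh k)) - ∑ k, outer (v k) (v k)) := by
  classical
  set c : ℝ := ∑ k, (vh k ⬝ᵥ vj) ^ 2 with hc
  have hc0 : 0 ≤ c := Finset.sum_nonneg fun k _ => sq_nonneg _
  have hvj : vj ⬝ᵥ vj = 1 := by
    have := hunit
    rw [enorm_eq, Real.sqrt_eq_one] at this
    exact this
  -- the projected vector
  have hAmul : (∑ k, outer (vh k) (vh k)) *ᵥ vj = ∑ k, (vh k ⬝ᵥ vj) • vh k := by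
    rw [sum_mulVec']
    exact Finset.sum_congr rfl fun k _ => outer_mulVec _ _
  set s : Fin p → ℝ := ∑ k, (vh k ⬝ᵥ vj) • vh k with hs
  have h1 : s ⬝ᵥ vj = c := by
    rw [hs, sum_dotProduct']
    simp [smul_dotProduct, sq, hc]
  have h1' : vj ⬝ᵥ s = c := by rw [dotProduct_comm]; exact h1
  have h2 : s ⬝ᵥ s = c := by
    rw [hs, sum_dotProduct']
    have : ∀ k : Fin m, ((vh k ⬝ᵥ vj) • vh k) ⬝ᵥ (∑ l, (vh l ⬝ᵥ vj) • vh l)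
        = (vh k ⬝ᵥ vj) ^ 2 := by
      intro k
      rw [smul_dotProduct, dotProduct_sum']
      simp only [dotProduct_smul, horthoh, smul_eq_mul, mul_ite, mul_one, mul_zero,
        Finset.sum_ite_eq', Finset.sum_ite_eq, Finset.mem_univ, if_true, sq]
    simp [this, hc]
  set w : Fin p → ℝ := vj - (∑ k, outer (vh k) (vh k)) *ᵥ vj with hw
  have hw' : w = vj - s := by rw [hw, hAmul]
  have hww : w ⬝ᵥ w = 1 - c := by
    rw [hw']
    simp [sub_dotProduct, dotProduct_sub, hvj, h1, h1', h2]
  have hwv : w ⬝ᵥ vj = 1 - c := by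
    rw [hw']
    simp [sub_dotProduct, hvj, h1]
  set r : ℝ := enorm' w with hr
  have hr0 : 0 ≤ r := Real.sqrt_nonneg _
  have hrsq : r ^ 2 = 1 - c := by
    rw [hr, enorm_eq, sq, Real.mul_self_sqrt]
    · exact hww
    · rw [hww]
      nlinarith [dot_sq w, Finset.sum_nonneg (fun i (_ : i ∈ Finset.univ) => sq_nonneg (w i)), hww]
  have hrne : r ≠ 0 := hne
  have hrpos : 0 < r := lt_of_le_of_ne hr0 (Ne.symm hrne)
  -- LHS squared
  set u : Fin p → ℝ := r⁻¹ • w - vj with hu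
  have huu : u ⬝ᵥ u = 2 - 2 * r := by
    rw [hu]
    simp only [sub_dotProduct, dotProduct_sub, smul_dotProduct, dotProduct_smul, smul_eq_mul,
      hww, hwv, hvj]
    have hwv' : vj ⬝ᵥ w = 1 - c := by rw [dotProduct_comm]; exact hwv
    rw [hwv']
    have hr2 : r * r = 1 - c := by nlinarith [hrsq]
    field_simp
    nlinarith [hr2]
  -- RHS : Frobenius bound
  set M : Matrix (Fin p) (Fin p) ℝ := (∑ k, outer (vh k) (vh k)) - ∑ k, outer (v k) (v k)
    with hM
  set F : ℝ := fnorm M with hF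
  have hF0 : 0 ≤ F := Real.sqrt_nonneg _
  have hFsq : F ^ 2 = ∑ i, ∑ j, (M i j) ^ 2 := by
    rw [hF, fnorm, sq, Real.mul_self_sqrt]
    exact Finset.sum_nonneg fun i _ => Finset.sum_nonneg fun j _ => sq_nonneg _
  have hMv : M *ᵥ vj = s := by
    rw [hM, Matrix.sub_mulVec, hAmul, sum_mulVec']
    have : ∀ k : Fin m, outer (v k) (v k) *ᵥ vj = 0 := by
      intro k
      rw [outer_mulVec, dotProduct_comm, hperp k, zero_smul]
    simp [this]
  have hcle : c ≤ F ^ 2 := by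
    have hss : ∑ i, ((M *ᵥ vj) i) ^ 2 = c := by
      rw [← dot_sq, hMv, h2]
    rw [← hss, hFsq]
    apply Finset.sum_le_sum
    intro i _
    have : (M *ᵥ vj) i = ∑ j, M i j * vj j := by simp [mulVec, dotProduct]
    rw [this]
    calc (∑ j, M i j * vj j) ^ 2 ≤ (∑ j, (M i j) ^ 2) * ∑ j, (vj j) ^ 2 :=
          Finset.sum_mul_sq_le_sq_mul_sq _ _ _
      _ = ∑ j, (M i j) ^ 2 := by rw [← dot_sq vj, hvj, mul_one]
  -- combine
  have hle : u ⬝ᵥ u ≤ (2 * F) ^ 2 := by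
    rw [huu]
    nlinarith [hrsq, hcle, hrpos, hc0, sq_nonneg (1 - r)]
  calc enorm' u = Real.sqrt (u ⬝ᵥ u) := enorm_eq u
    _ ≤ Real.sqrt ((2 * F) ^ 2) := Real.sqrt_le_sqrt hle
    _ = 2 * F := by rw [Real.sqrt_sq (by positivity)]
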